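/- Let R be an n×n symmetric positive definite matrix, ξ a nonempty proper subset of indices, z ∈ R^n. Then z_ξ - R_{[ξ,-ξ]}(R_{[-ξ,-ξ]})^{-1} z_{-ξ} = ([R^{-1}]_{[ξ,ξ]})^{-1} [R^{-1} z]_{[ξ]}; that is, the vector of leave-ξ-out Gaussian conditional prediction errors equals the inverse of the (ξ,ξ)-block of R^{-1} applied to the ξ-rows of R^{-1} z. -/

import Mathlib

open Matrix

/-- Dubrule's fast cross-validation identity: for a symmetric positive definite `R`
(partitioned along `ξ ⊕ ξᶜ`) and `z ∈ ℝⁿ`, the leave-`ξ`-out Gaussian conditional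
prediction errors `z_ξ - R_{ξ,-ξ} (R_{-ξ,-ξ})⁻¹ z_{-ξ}` equal
`([R⁻¹]_{ξξ})⁻¹ [R⁻¹ z]_ξ`. -/
theorem fast_cross_validation_errors {ξ η : Type*} [Fintype ξ] [Fintype η]
    [DecidableEq ξ] [DecidableEq η] [Nonempty ξ] [Nonempty η]
    (R : Matrix (ξ ⊕ η) (ξ ⊕ η) ℝ) (hR : R.PosDef) (z : ξ ⊕ η → ℝ) :
    (fun i => z (Sum.inl i))
        - R.toBlocks₁₂.mulVec ((R.toBlocks₂₂)⁻¹.mulVec fun j => z (Sum.inr j))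
      = ((R⁻¹).toBlocks₁₁)⁻¹.mulVec fun i => (R⁻¹.mulVec z) (Sum.inl i) := by
  set A := R.toBlocks₁₁ with hA
  set B := R.toBlocks₁₂ with hB
  set C := R.toBlocks₂₁ with hC
  set D := R.toBlocks₂₂ with hDdef
  have hRfb : R = fromBlocks A B C D := (fromBlocks_toBlocks R).symm
  have hD : D.PosDef := by
    exact hR.submatrix Sum.inr_injective
  haveI : Invertible R := hR.isUnit.invertible
  haveI : Invertible D := hD.isUnit.invertible
  haveI : Invertible (fromBlocks A B C D) := hRfb ▸ ‹Invertible R›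
  haveI iS : Invertible (A - B * ⅟D * C) := invertibleOfFromBlocks₂₂Invertible A B C D
  set S := A - B * ⅟D * C with hS
  have hRinv : R⁻¹ = fromBlocks (⅟S) (-(⅟S * B * ⅟D)) (-(⅟D * C * ⅟S))
      (⅟D + ⅟D * C * ⅟S * B * ⅟D) := by
    rw [hRfb, ← invOf_eq_nonsing_inv, invOf_fromBlocks₂₂_eq]
  have h11 : (R⁻¹).toBlocks₁₁ = ⅟S := by rw [hRinv, toBlocks_fromBlocks₁₁]
  haveI : Invertible (⅟S) := invertibleInvOf
  have h11inv : ((R⁻¹).toBlocks₁₁)⁻¹ = S := by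
    rw [h11, ← invOf_eq_nonsing_inv, invOf_invOf]
  have hz : z = Sum.elim (fun i => z (Sum.inl i)) (fun j => z (Sum.inr j)) := by
    ext (i | j) <;> rfl
  have hmv : (fun i => (R⁻¹.mulVec z) (Sum.inl i))
      = ⅟S *ᵥ (fun i => z (Sum.inl i)) + (-(⅟S * B * ⅟D)) *ᵥ (fun j => z (Sum.inr j)) := by
    funext i
    rw [hRinv]
    conv_lhs => rw [hz]
    rw [fromBlocks_mulVec]
    rfl
  have e1 : S * ⅟S = 1 := mul_invOf_self S
  have e2 : S * -(⅟S * B * ⅟D) = -(B * D⁻¹) := by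
    rw [Matrix.mul_neg, ← Matrix.mul_assoc, ← Matrix.mul_assoc, mul_invOf_self S,
      Matrix.one_mul, invOf_eq_nonsing_inv]
  have e3 : S * (⅟S * B * ⅟D) = B * D⁻¹ := by
    rw [← Matrix.mul_assoc, ← Matrix.mul_assoc, mul_invOf_self S,
      Matrix.one_mul, invOf_eq_nonsing_inv]
  rw [h11inv, hmv, mulVec_add, neg_mulVec, Matrix.mulVec_neg]
  have r1 : S *ᵥ ⅟S *ᵥ (fun i => z (Sum.inl i)) = fun i => z (Sum.inl i) := by
    rw [mulVec_mulVec, e1, one_mulVec]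
  have r2 : S *ᵥ (⅟S * B * ⅟D) *ᵥ (fun j => z (Sum.inr j))
      = (B * D⁻¹) *ᵥ (fun j => z (Sum.inr j)) := by
    rw [mulVec_mulVec, e3]
  rw [r1, r2, ← sub_eq_add_neg, mulVec_mulVec]
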